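/- Uniqueness of classical solutions of the coupled drug-release system: let δ, P̃, Pe, Da, K, l, T > 0 and φ ∈ (0,1). If (c, c₁, c₂) and (ĉ, ĉ₁, ĉ₂) are two classical solutions of the coupled drug-release system on [0,T] with the same initial data, i.e. c(x,0) = ĉ(x,0) for all x ∈ [-l,0] and c₁(x,0) = ĉ₁(x,0), c₂(x,0) = ĉ₂(x,0) for all x ∈ [0,1], then c = ĉ on [-l,0] × [0,T] and c₁ = ĉ₁, c₂ = ĉ₂ on [0,1] × [0,T]. -/

import Mathlib

/-- A classical solution of the coupled 1-d drug-release system on `[0,T]`: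
`c` (stent concentration on `[-l,0]`), `c₁` (extracellular) and `c₂` (intracellular,
on `[0,1]`), together with their partial derivatives `ct, cx, cxx`, `c₁t, c₁x, c₁xx`,
`c₂t`, all continuous on the respective space-time boxes, satisfying the PDEs,
boundary and interface conditions of the model. -/
structure IsClassicalSolution (δ Pt Pe Da K l T φ : ℝ)
    (c ct cx cxx c₁ c₁t c₁x c₁xx c₂ c₂t : ℝ → ℝ → ℝ) : Prop where
  cont_c : ContinuousOn (fun p : ℝ × ℝ => c p.1 p.2) (Set.Icc (-l) 0 ×ˢ Set.Icc 0 T)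
  cont_ct : ContinuousOn (fun p : ℝ × ℝ => ct p.1 p.2) (Set.Icc (-l) 0 ×ˢ Set.Icc 0 T)
  cont_cx : ContinuousOn (fun p : ℝ × ℝ => cx p.1 p.2) (Set.Icc (-l) 0 ×ˢ Set.Icc 0 T)
  cont_cxx : ContinuousOn (fun p : ℝ × ℝ => cxx p.1 p.2) (Set.Icc (-l) 0 ×ˢ Set.Icc 0 T)
  cont_c₁ : ContinuousOn (fun p : ℝ × ℝ => c₁ p.1 p.2) (Set.Icc (0 : ℝ) 1 ×ˢ Set.Icc 0 T)
  cont_c₁t : ContinuousOn (fun p : ℝ × ℝ => c₁t p.1 p.2) (Set.Icc (0 : ℝ) 1 ×ˢ Set.Icc 0 T)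
  cont_c₁x : ContinuousOn (fun p : ℝ × ℝ => c₁x p.1 p.2) (Set.Icc (0 : ℝ) 1 ×ˢ Set.Icc 0 T)
  cont_c₁xx : ContinuousOn (fun p : ℝ × ℝ => c₁xx p.1 p.2) (Set.Icc (0 : ℝ) 1 ×ˢ Set.Icc 0 T)
  cont_c₂ : ContinuousOn (fun p : ℝ × ℝ => c₂ p.1 p.2) (Set.Icc (0 : ℝ) 1 ×ˢ Set.Icc 0 T)
  cont_c₂t : ContinuousOn (fun p : ℝ × ℝ => c₂t p.1 p.2) (Set.Icc (0 : ℝ) 1 ×ˢ Set.Icc 0 T)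
  hasDeriv_ct : ∀ x ∈ Set.Icc (-l) 0, ∀ t ∈ Set.Icc 0 T,
    HasDerivWithinAt (fun s => c x s) (ct x t) (Set.Icc 0 T) t
  hasDeriv_cx : ∀ x ∈ Set.Icc (-l) 0, ∀ t ∈ Set.Icc 0 T,
    HasDerivWithinAt (fun y => c y t) (cx x t) (Set.Icc (-l) 0) x
  hasDeriv_cxx : ∀ x ∈ Set.Icc (-l) 0, ∀ t ∈ Set.Icc 0 T,
    HasDerivWithinAt (fun y => cx y t) (cxx x t) (Set.Icc (-l) 0) x
  hasDeriv_c₁t : ∀ x ∈ Set.Icc (0 : ℝ) 1, ∀ t ∈ Set.Icc 0 T,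
    HasDerivWithinAt (fun s => c₁ x s) (c₁t x t) (Set.Icc 0 T) t
  hasDeriv_c₁x : ∀ x ∈ Set.Icc (0 : ℝ) 1, ∀ t ∈ Set.Icc 0 T,
    HasDerivWithinAt (fun y => c₁ y t) (c₁x x t) (Set.Icc (0 : ℝ) 1) x
  hasDeriv_c₁xx : ∀ x ∈ Set.Icc (0 : ℝ) 1, ∀ t ∈ Set.Icc 0 T,
    HasDerivWithinAt (fun y => c₁x y t) (c₁xx x t) (Set.Icc (0 : ℝ) 1) x
  hasDeriv_c₂t : ∀ x ∈ Set.Icc (0 : ℝ) 1, ∀ t ∈ Set.Icc 0 T,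
    HasDerivWithinAt (fun s => c₂ x s) (c₂t x t) (Set.Icc 0 T) t
  pde_c : ∀ x ∈ Set.Ioo (-l) 0, ∀ t ∈ Set.Ioc 0 T, ct x t = δ * cxx x t
  bc_lumen : ∀ t ∈ Set.Ioc 0 T, cx (-l) t = 0
  bc_interface_c : ∀ t ∈ Set.Ioc 0 T, cx 0 t + Pt * c 0 t = Pt * c₁ 0 t
  pde_c₁ : ∀ x ∈ Set.Ioo (0 : ℝ) 1, ∀ t ∈ Set.Ioc 0 T,
    φ * c₁t x t = c₁xx x t - Pe * c₁x x t - Da * c₁ x t + (Da / K) * c₂ x t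
  bc_interface_c₁ : ∀ t ∈ Set.Ioc 0 T, c₁x 0 t - Pe * c₁ 0 t = δ * cx 0 t
  bc_adventitia : ∀ t ∈ Set.Ioc 0 T, c₁x 1 t = 0
  ode_c₂ : ∀ x ∈ Set.Icc (0 : ℝ) 1, ∀ t ∈ Set.Ioc 0 T,
    (1 - φ) * c₂t x t + (Da / K) * c₂ x t = Da * c₁ x t


open Set MeasureTheory intervalIntegral

/-- slice continuity in `x`. -/
lemma dr_sliceX {a b c d : ℝ} {g : ℝ → ℝ → ℝ}
    (hg : ContinuousOn (fun p : ℝ × ℝ => g p.1 p.2) (Icc a b ×ˢ Icc c d))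
    {t : ℝ} (ht : t ∈ Icc c d) : ContinuousOn (fun x => g x t) (Icc a b) :=
  hg.comp (f := fun x : ℝ => (x, t)) (s := Icc a b) (continuousOn_id.prodMk continuousOn_const) (fun x hx => ⟨hx, ht⟩)

/-- slice continuity in `t`. -/
lemma dr_sliceT {a b c d : ℝ} {g : ℝ → ℝ → ℝ}
    (hg : ContinuousOn (fun p : ℝ × ℝ => g p.1 p.2) (Icc a b ×ˢ Icc c d))
    {x : ℝ} (hx : x ∈ Icc a b) : ContinuousOn (fun t => g x t) (Icc c d) :=
  hg.comp (f := fun t : ℝ => (x, t)) (s := Icc c d) (continuousOn_const.prodMk continuousOn_id) (fun t ht => ⟨hx, ht⟩)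

/-- interval integrals of functions agreeing on the open interval agree. -/
lemma dr_integral_congr_Ioo {a b : ℝ} (hab : a ≤ b) {f g : ℝ → ℝ}
    (h : ∀ x ∈ Ioo a b, f x = g x) :
    ∫ x in a..b, f x = ∫ x in a..b, g x := by
  apply intervalIntegral.integral_congr_ae
  have hb : ∀ᵐ x : ℝ, x ≠ b := by
    have : (volume : Measure ℝ) {b} = 0 := measure_singleton b
    rw [ae_iff]
    simpa using this
  filter_upwards [hb] with x hxb hxI
  rw [Set.uIoc_of_le hab] at hxI
  exact h x ⟨hxI.1, lt_of_le_of_ne hxI.2 hxb⟩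

/-- continuity of a parametric interval integral. -/
lemma dr_contParamInt {a b c d : ℝ} (hab : a ≤ b) {g : ℝ → ℝ → ℝ}
    (hg : ContinuousOn (fun p : ℝ × ℝ => g p.1 p.2) (Icc a b ×ˢ Icc c d)) :
    ContinuousOn (fun t => ∫ x in a..b, g x t) (Icc c d) := by
  rcases le_or_gt c d with hcd | hcd
  · obtain ⟨C, hC⟩ : ∃ C, ∀ p ∈ Icc a b ×ˢ Icc c d, ‖(fun p : ℝ × ℝ => g p.1 p.2) p‖ ≤ C :=
      (isCompact_Icc.prod isCompact_Icc).exists_bound_of_continuousOn hg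
    simp only [intervalIntegral.integral_of_le hab]
    apply MeasureTheory.continuousOn_of_dominated (bound := fun _ => C)
    · intro t ht
      exact ((dr_sliceX hg ht).mono Ioc_subset_Icc_self).aestronglyMeasurable measurableSet_Ioc
    · intro t ht
      rw [ae_restrict_iff' measurableSet_Ioc]
      exact ae_of_all _ fun x hx => hC (x, t) ⟨Ioc_subset_Icc_self hx, ht⟩
    · exact (integrableOn_const_iff).2 (Or.inr measure_Ioc_lt_top)
    · rw [ae_restrict_iff' measurableSet_Ioc]
      exact ae_of_all _ fun x hx => dr_sliceT hg (Ioc_subset_Icc_self hx)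
  · rw [Set.Icc_eq_empty_of_lt hcd]
    exact continuousOn_empty _

/-- differentiation of a parametric interval integral in the parameter, at interior times. -/
lemma dr_derivParamInt {a b T : ℝ} (hab : a ≤ b) {g gt : ℝ → ℝ → ℝ}
    (hg : ContinuousOn (fun p : ℝ × ℝ => g p.1 p.2) (Icc a b ×ˢ Icc 0 T))
    (hgt : ContinuousOn (fun p : ℝ × ℝ => gt p.1 p.2) (Icc a b ×ˢ Icc 0 T))
    (hd : ∀ x ∈ Icc a b, ∀ t ∈ Icc 0 T,
      HasDerivWithinAt (fun s => g x s) (gt x t) (Icc 0 T) t)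
    {t₀ : ℝ} (ht₀ : t₀ ∈ Ioo 0 T) :
    HasDerivAt (fun t => ∫ x in a..b, g x t) (∫ x in a..b, gt x t₀) t₀ := by
  obtain ⟨C, hC⟩ : ∃ C, ∀ p ∈ Icc a b ×ˢ Icc 0 T, ‖(fun p : ℝ × ℝ => gt p.1 p.2) p‖ ≤ C :=
    (isCompact_Icc.prod isCompact_Icc).exists_bound_of_continuousOn hgt
  set ε : ℝ := min t₀ (T - t₀) with hε
  have hε_pos : 0 < ε := lt_min ht₀.1 (by linarith [ht₀.2])
  have hball : Metric.ball t₀ ε ⊆ Ioo 0 T := by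
    intro s hs
    rw [Metric.mem_ball, Real.dist_eq, abs_lt] at hs
    constructor
    · have := hs.1; have : -(min t₀ (T - t₀)) < s - t₀ := this
      have h1 : min t₀ (T - t₀) ≤ t₀ := min_le_left _ _
      linarith
    · have := hs.2
      have h2 : min t₀ (T - t₀) ≤ T - t₀ := min_le_right _ _
      linarith
  have hIcc : Metric.ball t₀ ε ⊆ Icc 0 T := hball.trans Ioo_subset_Icc_self
  have hIab : Set.uIoc a b = Ioc a b := Set.uIoc_of_le hab
  have key := intervalIntegral.hasDerivAt_integral_of_dominated_loc_of_deriv_le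
    (F := fun t x => g x t) (F' := fun t x => gt x t) (x₀ := t₀) (a := a) (b := b)
    (μ := volume) (bound := fun _ => C) (Metric.ball_mem_nhds t₀ hε_pos) ?_ ?_ ?_ ?_ ?_ ?_
  · exact key.2
  · filter_upwards [Metric.ball_mem_nhds t₀ hε_pos] with t ht
    rw [hIab]
    exact ((dr_sliceX hg (hIcc ht)).mono Ioc_subset_Icc_self).aestronglyMeasurable
      measurableSet_Ioc
  · exact (dr_sliceX hg (hIcc (Metric.mem_ball_self hε_pos))).intervalIntegrable_of_Icc hab
  · rw [hIab]
    exact ((dr_sliceX hgt (hIcc (Metric.mem_ball_self hε_pos))).mono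
      Ioc_subset_Icc_self).aestronglyMeasurable measurableSet_Ioc
  · apply ae_of_all
    intro x hx t ht
    rw [hIab] at hx
    exact hC (x, t) ⟨Ioc_subset_Icc_self hx, hIcc ht⟩
  · exact intervalIntegrable_const
  · apply ae_of_all
    intro x hx t ht
    rw [hIab] at hx
    have htI := hball ht
    exact (hd x (Ioc_subset_Icc_self hx) t (Ioo_subset_Icc_self htI)).hasDerivAt
      (Icc_mem_nhds htI.1 htI.2)

/-- integration by parts with one-sided derivatives on `[a,b]`. -/
lemma dr_ibp {a b : ℝ} (hab : a ≤ b) {u u' v v' : ℝ → ℝ}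
    (hu : ∀ x ∈ Icc a b, HasDerivWithinAt u (u' x) (Icc a b) x)
    (hv : ∀ x ∈ Icc a b, HasDerivWithinAt v (v' x) (Icc a b) x)
    (hu' : ContinuousOn u' (Icc a b)) (hv' : ContinuousOn v' (Icc a b)) :
    ∫ x in a..b, (u' x * v x + u x * v' x) = u b * v b - u a * v a := by
  have huc : ContinuousOn u (Icc a b) := fun x hx => (hu x hx).continuousWithinAt
  have hvc : ContinuousOn v (Icc a b) := fun x hx => (hv x hx).continuousWithinAt
  apply intervalIntegral.integral_eq_sub_of_hasDeriv_right_of_le hab (huc.mul hvc)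
  · intro x hx
    have hxI : x ∈ Icc a b := Ioo_subset_Icc_self hx
    have hnhds : Icc a b ∈ nhds x := Icc_mem_nhds hx.1 hx.2
    exact (((hu x hxI).hasDerivAt hnhds).mul ((hv x hxI).hasDerivAt hnhds)).hasDerivWithinAt
  · exact ((hu'.mul hvc).add (huc.mul hv')).intervalIntegrable_of_Icc hab

/-- continuous nonnegative function on `[a,b]` with zero integral vanishes. -/
lemma dr_eq_zero_of_integral_eq_zero {a b : ℝ} (hab : a < b) {f : ℝ → ℝ}
    (hf : ContinuousOn f (Icc a b)) (hnn : ∀ x ∈ Icc a b, 0 ≤ f x)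
    (hint : ∫ x in a..b, f x = 0) : ∀ x ∈ Icc a b, f x = 0 := by
  intro x hx
  by_contra h
  have hpos : 0 < f x := lt_of_le_of_ne (hnn x hx) (Ne.symm h)
  have := intervalIntegral.integral_pos hab hf (fun y hy => hnn y (Ioc_subset_Icc_self hy))
    ⟨x, hx, hpos⟩
  rw [hint] at this
  exact lt_irrefl 0 this


set_option maxHeartbeats 2000000 in
lemma dr_zero_solution (δ Pt Pe Da K l T φ : ℝ)
    (hδ : 0 < δ) (hPt : 0 < Pt) (hPe : 0 < Pe) (hDa : 0 < Da) (hK : 0 < K)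
    (hl : 0 < l) (hT : 0 < T) (hφ : φ ∈ Set.Ioo (0 : ℝ) 1)
    (u ut ux uxx v vt vx vxx w wt : ℝ → ℝ → ℝ)
    (hsol : IsClassicalSolution δ Pt Pe Da K l T φ u ut ux uxx v vt vx vxx w wt)
    (hic : ∀ x ∈ Icc (-l) 0, u x 0 = 0)
    (hic1 : ∀ x ∈ Icc (0:ℝ) 1, v x 0 = 0)
    (hic2 : ∀ x ∈ Icc (0:ℝ) 1, w x 0 = 0) :
    (∀ x ∈ Icc (-l) 0, ∀ t ∈ Icc 0 T, u x t = 0) ∧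
    (∀ x ∈ Icc (0:ℝ) 1, ∀ t ∈ Icc 0 T, v x t = 0) ∧
    (∀ x ∈ Icc (0:ℝ) 1, ∀ t ∈ Icc 0 T, w x t = 0) := by
  obtain ⟨hφ0, hφ1⟩ := hφ
  have hl0 : (-l:ℝ) ≤ 0 := by linarith
  have hl0' : (-l:ℝ) < 0 := by linarith
  have h01 : (0:ℝ) ≤ 1 := zero_le_one
  set ρ : ℝ → ℝ := fun x => Real.exp (-Pe * x) with hρdef
  have hρc : Continuous ρ := Real.continuous_exp.comp (continuous_const.mul continuous_id)
  have hρpos : ∀ x, 0 < ρ x := fun x => Real.exp_pos _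
  have hρd : ∀ x : ℝ, HasDerivAt ρ (-Pe * ρ x) x := by
    intro x
    have h1 : HasDerivAt (fun y : ℝ => -Pe * y) (-Pe) x := by
      simpa using (hasDerivAt_id x).const_mul (-Pe)
    have h2 := (Real.hasDerivAt_exp (-Pe * x)).comp x h1
    have h3 : HasDerivAt (fun y => Real.exp (-Pe * y)) (Real.exp (-Pe * x) * (-Pe)) x := h2
    have h4 : Real.exp (-Pe * x) * (-Pe) = -Pe * ρ x := by rw [hρdef]; ring
    rw [hρdef]
    exact h4 ▸ h3
  have hρ0 : ρ 0 = 1 := by simp [hρdef]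
  -- joint continuity of the integrands
  have hc_uu : ContinuousOn (fun p : ℝ × ℝ => u p.1 p.2 * u p.1 p.2)
      (Icc (-l) 0 ×ˢ Icc 0 T) := hsol.cont_c.mul hsol.cont_c
  have hρfst : ContinuousOn (fun p : ℝ × ℝ => ρ p.1) (Icc (0:ℝ) 1 ×ˢ Icc 0 T) :=
    (hρc.comp continuous_fst).continuousOn
  have hc_vv : ContinuousOn (fun p : ℝ × ℝ => ρ p.1 * (v p.1 p.2 * v p.1 p.2))
      (Icc (0:ℝ) 1 ×ˢ Icc 0 T) := hρfst.mul (hsol.cont_c₁.mul hsol.cont_c₁)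
  have hc_ww : ContinuousOn (fun p : ℝ × ℝ => ρ p.1 * (w p.1 p.2 * w p.1 p.2))
      (Icc (0:ℝ) 1 ×ˢ Icc 0 T) := hρfst.mul (hsol.cont_c₂.mul hsol.cont_c₂)
  -- the energies
  set E1 : ℝ → ℝ := fun t => ∫ x in (-l)..0, u x t * u x t with hE1def
  set E2 : ℝ → ℝ := fun t => ∫ x in (0:ℝ)..1, ρ x * (v x t * v x t) with hE2def
  set E3 : ℝ → ℝ := fun t => ∫ x in (0:ℝ)..1, ρ x * (w x t * w x t) with hE3def
  set E : ℝ → ℝ := fun t => E1 t + φ * E2 t + ((1-φ)/K) * E3 t with hEdef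
  have hE1c : ContinuousOn E1 (Icc 0 T) := dr_contParamInt hl0 hc_uu
  have hE2c : ContinuousOn E2 (Icc 0 T) := dr_contParamInt h01 hc_vv
  have hE3c : ContinuousOn E3 (Icc 0 T) := dr_contParamInt h01 hc_ww
  have hEc : ContinuousOn E (Icc 0 T) :=
    (hE1c.add (continuousOn_const.mul hE2c)).add (continuousOn_const.mul hE3c)
  have hE1nn : ∀ t, 0 ≤ E1 t := fun t =>
    intervalIntegral.integral_nonneg hl0 (fun x _ => mul_self_nonneg _)
  have hE2nn : ∀ t, 0 ≤ E2 t := fun t =>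
    intervalIntegral.integral_nonneg h01
      (fun x _ => mul_nonneg (hρpos x).le (mul_self_nonneg _))
  have hE3nn : ∀ t, 0 ≤ E3 t := fun t =>
    intervalIntegral.integral_nonneg h01
      (fun x _ => mul_nonneg (hρpos x).le (mul_self_nonneg _))
  -- initial energy
  have hE10 : E1 0 = 0 := by
    have h1 : ∫ x in (-l)..0, u x 0 * u x 0 = ∫ x in (-l)..0, (0:ℝ) := by
      apply intervalIntegral.integral_congr
      intro x hx
      rw [Set.uIcc_of_le hl0] at hx
      simp [hic x hx]
    simpa using h1
  have hE20 : E2 0 = 0 := by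
    have h1 : ∫ x in (0:ℝ)..1, ρ x * (v x 0 * v x 0) = ∫ x in (0:ℝ)..1, (0:ℝ) := by
      apply intervalIntegral.integral_congr
      intro x hx
      rw [Set.uIcc_of_le h01] at hx
      simp [hic1 x hx]
    simpa using h1
  have hE30 : E3 0 = 0 := by
    have h1 : ∫ x in (0:ℝ)..1, ρ x * (w x 0 * w x 0) = ∫ x in (0:ℝ)..1, (0:ℝ) := by
      apply intervalIntegral.integral_congr
      intro x hx
      rw [Set.uIcc_of_le h01] at hx
      simp [hic2 x hx]
    simpa using h1
  have hE0 : E 0 = 0 := by rw [hEdef]; simp [hE10, hE20, hE30]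
  -- derivative of the energy is nonpositive on the interior
  have hkey : ∀ t₀ ∈ Ioo (0:ℝ) T, ∃ D, HasDerivAt E D t₀ ∧ D ≤ 0 := by
    intro t₀ ht₀
    have ht₀I : t₀ ∈ Icc (0:ℝ) T := Ioo_subset_Icc_self ht₀
    have ht₀O : t₀ ∈ Ioc (0:ℝ) T := ⟨ht₀.1, ht₀.2.le⟩
    -- slice continuity in x at time t₀
    have hUc : ContinuousOn (fun x => u x t₀) (Icc (-l) 0) := dr_sliceX hsol.cont_c ht₀I
    have hUxc : ContinuousOn (fun x => ux x t₀) (Icc (-l) 0) := dr_sliceX hsol.cont_cx ht₀I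
    have hUxxc : ContinuousOn (fun x => uxx x t₀) (Icc (-l) 0) := dr_sliceX hsol.cont_cxx ht₀I
    have hVc : ContinuousOn (fun x => v x t₀) (Icc (0:ℝ) 1) := dr_sliceX hsol.cont_c₁ ht₀I
    have hVxc : ContinuousOn (fun x => vx x t₀) (Icc (0:ℝ) 1) := dr_sliceX hsol.cont_c₁x ht₀I
    have hVxxc : ContinuousOn (fun x => vxx x t₀) (Icc (0:ℝ) 1) := dr_sliceX hsol.cont_c₁xx ht₀I
    have hWc : ContinuousOn (fun x => w x t₀) (Icc (0:ℝ) 1) := dr_sliceX hsol.cont_c₂ ht₀I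
    -- boundary conditions at t₀
    have hUxl : ux (-l) t₀ = 0 := hsol.bc_lumen t₀ ht₀O
    have hUx0 : ux 0 t₀ + Pt * u 0 t₀ = Pt * v 0 t₀ := hsol.bc_interface_c t₀ ht₀O
    have hVx0 : vx 0 t₀ - Pe * v 0 t₀ = δ * ux 0 t₀ := hsol.bc_interface_c₁ t₀ ht₀O
    have hVx1 : vx 1 t₀ = 0 := hsol.bc_adventitia t₀ ht₀O
    -- spatial derivatives at t₀
    have hUd : ∀ x ∈ Icc (-l) 0, HasDerivWithinAt (fun y => u y t₀) (ux x t₀) (Icc (-l) 0) x :=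
      fun x hx => hsol.hasDeriv_cx x hx t₀ ht₀I
    have hUxd : ∀ x ∈ Icc (-l) 0, HasDerivWithinAt (fun y => ux y t₀) (uxx x t₀) (Icc (-l) 0) x :=
      fun x hx => hsol.hasDeriv_cxx x hx t₀ ht₀I
    have hVd : ∀ x ∈ Icc (0:ℝ) 1, HasDerivWithinAt (fun y => v y t₀) (vx x t₀) (Icc (0:ℝ) 1) x :=
      fun x hx => hsol.hasDeriv_c₁x x hx t₀ ht₀I
    have hVxd : ∀ x ∈ Icc (0:ℝ) 1, HasDerivWithinAt (fun y => vx y t₀) (vxx x t₀) (Icc (0:ℝ) 1) x :=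
      fun x hx => hsol.hasDeriv_c₁xx x hx t₀ ht₀I
    -- time differentiation under the integral sign
    have hD1 : HasDerivAt E1
        (∫ x in (-l)..0, (ut x t₀ * u x t₀ + u x t₀ * ut x t₀)) t₀ := by
      apply dr_derivParamInt hl0 hc_uu
        ((hsol.cont_ct.mul hsol.cont_c).add (hsol.cont_c.mul hsol.cont_ct))
        ?_ ht₀
      intro x hx t ht
      exact (hsol.hasDeriv_ct x hx t ht).mul (hsol.hasDeriv_ct x hx t ht)
    have hD2 : HasDerivAt E2
        (∫ x in (0:ℝ)..1, ρ x * (vt x t₀ * v x t₀ + v x t₀ * vt x t₀)) t₀ := by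
      apply dr_derivParamInt h01 hc_vv
        (hρfst.mul ((hsol.cont_c₁t.mul hsol.cont_c₁).add (hsol.cont_c₁.mul hsol.cont_c₁t)))
        ?_ ht₀
      intro x hx t ht
      exact ((hsol.hasDeriv_c₁t x hx t ht).mul (hsol.hasDeriv_c₁t x hx t ht)).const_mul (ρ x)
    have hD3 : HasDerivAt E3
        (∫ x in (0:ℝ)..1, ρ x * (wt x t₀ * w x t₀ + w x t₀ * wt x t₀)) t₀ := by
      apply dr_derivParamInt h01 hc_ww
        (hρfst.mul ((hsol.cont_c₂t.mul hsol.cont_c₂).add (hsol.cont_c₂.mul hsol.cont_c₂t)))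
        ?_ ht₀
      intro x hx t ht
      exact ((hsol.hasDeriv_c₂t x hx t ht).mul (hsol.hasDeriv_c₂t x hx t ht)).const_mul (ρ x)
    have hDE : HasDerivAt E
        ((∫ x in (-l)..0, (ut x t₀ * u x t₀ + u x t₀ * ut x t₀))
          + φ * (∫ x in (0:ℝ)..1, ρ x * (vt x t₀ * v x t₀ + v x t₀ * vt x t₀))
          + ((1-φ)/K) * (∫ x in (0:ℝ)..1, ρ x * (wt x t₀ * w x t₀ + w x t₀ * wt x t₀))) t₀ :=
      (hD1.add (hD2.const_mul φ)).add (hD3.const_mul ((1-φ)/K))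
    -- integration by parts
    have hibp1 : ∫ x in (-l)..0, (ux x t₀ * ux x t₀ + u x t₀ * uxx x t₀)
        = u 0 t₀ * ux 0 t₀ - u (-l) t₀ * ux (-l) t₀ := dr_ibp hl0 hUd hUxd hUxc hUxxc
    have hVxρd : ∀ x ∈ Icc (0:ℝ) 1, HasDerivWithinAt (fun y => ρ y * vx y t₀)
        (-Pe * ρ x * vx x t₀ + ρ x * vxx x t₀) (Icc (0:ℝ) 1) x :=
      fun x hx => ((hρd x).hasDerivWithinAt).mul (hVxd x hx)
    have hv'c : ContinuousOn (fun x => -Pe * ρ x * vx x t₀ + ρ x * vxx x t₀) (Icc (0:ℝ) 1) :=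
      (((continuous_const.mul hρc).continuousOn).mul hVxc).add (hρc.continuousOn.mul hVxxc)
    have hibp2 : ∫ x in (0:ℝ)..1, (vx x t₀ * (ρ x * vx x t₀)
          + v x t₀ * (-Pe * ρ x * vx x t₀ + ρ x * vxx x t₀))
        = v 1 t₀ * (ρ 1 * vx 1 t₀) - v 0 t₀ * (ρ 0 * vx 0 t₀) :=
      dr_ibp h01 hVd hVxρd hVxc hv'c
    -- compute the three derivative contributions
    have hJ1 : (∫ x in (-l)..0, (ut x t₀ * u x t₀ + u x t₀ * ut x t₀))
        = 2*δ*(u 0 t₀ * ux 0 t₀) - 2*δ*(∫ x in (-l)..0, ux x t₀ * ux x t₀) := by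
      have h1 : (∫ x in (-l)..0, (ut x t₀ * u x t₀ + u x t₀ * ut x t₀))
          = ∫ x in (-l)..0, (2*δ) * (u x t₀ * uxx x t₀) := by
        apply dr_integral_congr_Ioo hl0
        intro x hx
        have hpde := hsol.pde_c x hx t₀ ht₀O
        rw [hpde]; ring
      rw [h1, intervalIntegral.integral_const_mul]
      have hint1 : IntervalIntegrable (fun x => ux x t₀ * ux x t₀) volume (-l) 0 :=
        (hUxc.mul hUxc).intervalIntegrable_of_Icc hl0
      have hint2 : IntervalIntegrable (fun x => u x t₀ * uxx x t₀) volume (-l) 0 :=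
        (hUc.mul hUxxc).intervalIntegrable_of_Icc hl0
      have hadd := intervalIntegral.integral_add hint1 hint2
      rw [hibp1, hUxl] at hadd
      have h2 : ∫ x in (-l)..0, (u x t₀ * uxx x t₀)
          = u 0 t₀ * ux 0 t₀ - ∫ x in (-l)..0, ux x t₀ * ux x t₀ := by
        have := hadd.symm
        simp only [mul_zero] at this
        linarith [this]
      rw [h2]; ring
    have hJ2 : φ * (∫ x in (0:ℝ)..1, ρ x * (vt x t₀ * v x t₀ + v x t₀ * vt x t₀))
        = -2*(v 0 t₀ * vx 0 t₀) - 2*(∫ x in (0:ℝ)..1, ρ x * (vx x t₀ * vx x t₀))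
          - 2*Da*(∫ x in (0:ℝ)..1, ρ x * (v x t₀ * v x t₀))
          + (2*Da/K)*(∫ x in (0:ℝ)..1, ρ x * (v x t₀ * w x t₀)) := by
      rw [← intervalIntegral.integral_const_mul]
      have h1 : ∫ x in (0:ℝ)..1, φ * (ρ x * (vt x t₀ * v x t₀ + v x t₀ * vt x t₀))
          = ∫ x in (0:ℝ)..1, ((2:ℝ) * (v x t₀ * (-Pe * ρ x * vx x t₀ + ρ x * vxx x t₀))
            + ((-(2*Da)) * (ρ x * (v x t₀ * v x t₀))
              + (2*Da/K) * (ρ x * (v x t₀ * w x t₀)))) := by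
        apply dr_integral_congr_Ioo h01
        intro x hx
        have hpde := hsol.pde_c₁ x hx t₀ ht₀O
        linear_combination (2 * ρ x * v x t₀) * hpde
      rw [h1]
      have hintP : IntervalIntegrable
          (fun x => (2:ℝ) * (v x t₀ * (-Pe * ρ x * vx x t₀ + ρ x * vxx x t₀))) volume 0 1 :=
        (continuousOn_const.mul (hVc.mul hv'c)).intervalIntegrable_of_Icc h01
      have hintQ : IntervalIntegrable
          (fun x => (-(2*Da)) * (ρ x * (v x t₀ * v x t₀))) volume 0 1 :=
        (continuousOn_const.mul (hρc.continuousOn.mul (hVc.mul hVc))).intervalIntegrable_of_Icc h01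
      have hintR : IntervalIntegrable
          (fun x => (2*Da/K) * (ρ x * (v x t₀ * w x t₀))) volume 0 1 :=
        (continuousOn_const.mul (hρc.continuousOn.mul (hVc.mul hWc))).intervalIntegrable_of_Icc h01
      rw [intervalIntegral.integral_add hintP (hintQ.add hintR),
        intervalIntegral.integral_add hintQ hintR,
        intervalIntegral.integral_const_mul, intervalIntegral.integral_const_mul,
        intervalIntegral.integral_const_mul]
      have hintS : IntervalIntegrable (fun x => vx x t₀ * (ρ x * vx x t₀)) volume 0 1 :=
        (hVxc.mul (hρc.continuousOn.mul hVxc)).intervalIntegrable_of_Icc h01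
      have hintP2 : IntervalIntegrable
          (fun x => v x t₀ * (-Pe * ρ x * vx x t₀ + ρ x * vxx x t₀)) volume 0 1 :=
        (hVc.mul hv'c).intervalIntegrable_of_Icc h01
      have hadd := intervalIntegral.integral_add hintS hintP2
      rw [hibp2, hVx1, hρ0] at hadd
      simp only [mul_zero, one_mul, zero_sub] at hadd
      have h3 : ∫ x in (0:ℝ)..1, (vx x t₀ * (ρ x * vx x t₀))
          = ∫ x in (0:ℝ)..1, ρ x * (vx x t₀ * vx x t₀) :=
        intervalIntegral.integral_congr (fun x _ => by ring)
      have h2 : ∫ x in (0:ℝ)..1, (v x t₀ * (-Pe * ρ x * vx x t₀ + ρ x * vxx x t₀))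
          = -(v 0 t₀ * vx 0 t₀) - ∫ x in (0:ℝ)..1, ρ x * (vx x t₀ * vx x t₀) := by
        rw [← h3]; linarith [hadd]
      rw [h2]; ring
    have hJ3 : ((1-φ)/K) * (∫ x in (0:ℝ)..1, ρ x * (wt x t₀ * w x t₀ + w x t₀ * wt x t₀))
        = (2*Da/K)*(∫ x in (0:ℝ)..1, ρ x * (v x t₀ * w x t₀))
          - (2*Da/(K*K))*(∫ x in (0:ℝ)..1, ρ x * (w x t₀ * w x t₀)) := by
      rw [← intervalIntegral.integral_const_mul]
      have h1 : ∫ x in (0:ℝ)..1, ((1-φ)/K) * (ρ x * (wt x t₀ * w x t₀ + w x t₀ * wt x t₀))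
          = ∫ x in (0:ℝ)..1, ((2*Da/K) * (ρ x * (v x t₀ * w x t₀))
            + (-(2*Da/(K*K))) * (ρ x * (w x t₀ * w x t₀))) := by
        apply dr_integral_congr_Ioo h01
        intro x hx
        have hode := hsol.ode_c₂ x (Ioo_subset_Icc_self hx) t₀ ht₀O
        linear_combination ((2 * ρ x * w x t₀)/K) * hode
      have hintR : IntervalIntegrable
          (fun x => (2*Da/K) * (ρ x * (v x t₀ * w x t₀))) volume 0 1 :=
        (continuousOn_const.mul (hρc.continuousOn.mul (hVc.mul hWc))).intervalIntegrable_of_Icc h01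
      have hintT : IntervalIntegrable
          (fun x => (-(2*Da/(K*K))) * (ρ x * (w x t₀ * w x t₀))) volume 0 1 :=
        (continuousOn_const.mul (hρc.continuousOn.mul (hWc.mul hWc))).intervalIntegrable_of_Icc h01
      rw [h1, intervalIntegral.integral_add hintR hintT,
        intervalIntegral.integral_const_mul, intervalIntegral.integral_const_mul]
      ring
    -- cross-term estimate for the volume terms
    have hvol : 0 ≤ (∫ x in (0:ℝ)..1, ρ x * (v x t₀ * v x t₀))
        - (2/K)*(∫ x in (0:ℝ)..1, ρ x * (v x t₀ * w x t₀))
        + (1/(K*K))*(∫ x in (0:ℝ)..1, ρ x * (w x t₀ * w x t₀)) := by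
      have h1 : ∫ x in (0:ℝ)..1, (ρ x * ((v x t₀ - w x t₀/K) * (v x t₀ - w x t₀/K)))
          = ∫ x in (0:ℝ)..1, (ρ x * (v x t₀ * v x t₀)
            + ((-(2/K)) * (ρ x * (v x t₀ * w x t₀))
              + (1/(K*K)) * (ρ x * (w x t₀ * w x t₀)))) :=
        intervalIntegral.integral_congr (fun x _ => by ring)
      have h2 : (0:ℝ) ≤ ∫ x in (0:ℝ)..1,
          (ρ x * ((v x t₀ - w x t₀/K) * (v x t₀ - w x t₀/K))) :=
        intervalIntegral.integral_nonneg h01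
          (fun x _ => mul_nonneg (hρpos x).le (mul_self_nonneg _))
      have hintQ : IntervalIntegrable (fun x => ρ x * (v x t₀ * v x t₀)) volume 0 1 :=
        (hρc.continuousOn.mul (hVc.mul hVc)).intervalIntegrable_of_Icc h01
      have hintR : IntervalIntegrable
          (fun x => (-(2/K)) * (ρ x * (v x t₀ * w x t₀))) volume 0 1 :=
        (continuousOn_const.mul (hρc.continuousOn.mul (hVc.mul hWc))).intervalIntegrable_of_Icc h01
      have hintT : IntervalIntegrable
          (fun x => (1/(K*K)) * (ρ x * (w x t₀ * w x t₀))) volume 0 1 :=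
        (continuousOn_const.mul (hρc.continuousOn.mul (hWc.mul hWc))).intervalIntegrable_of_Icc h01
      rw [h1, intervalIntegral.integral_add hintQ (hintR.add hintT),
        intervalIntegral.integral_add hintR hintT,
        intervalIntegral.integral_const_mul, intervalIntegral.integral_const_mul] at h2
      linarith
    have hIUnn : (0:ℝ) ≤ ∫ x in (-l)..0, ux x t₀ * ux x t₀ :=
      intervalIntegral.integral_nonneg hl0 (fun x _ => mul_self_nonneg _)
    have hISnn : (0:ℝ) ≤ ∫ x in (0:ℝ)..1, ρ x * (vx x t₀ * vx x t₀) :=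
      intervalIntegral.integral_nonneg h01
        (fun x _ => mul_nonneg (hρpos x).le (mul_self_nonneg _))
    -- boundary terms estimate
    have hbnd : 2*δ*(u 0 t₀ * ux 0 t₀) - 2*(v 0 t₀ * vx 0 t₀) ≤ 0 := by
      have e1 : ux 0 t₀ = Pt * v 0 t₀ - Pt * u 0 t₀ := by linear_combination hUx0
      have e2 : vx 0 t₀ = Pe * v 0 t₀ + δ * ux 0 t₀ := by linear_combination hVx0
      rw [e2, e1]
      nlinarith [mul_nonneg (mul_nonneg hδ.le hPt.le) (sq_nonneg (u 0 t₀ - v 0 t₀)),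
        mul_nonneg hPe.le (sq_nonneg (v 0 t₀)), sq_nonneg (u 0 t₀ - v 0 t₀)]
    have t2 : 0 ≤ 2*Da*((∫ x in (0:ℝ)..1, ρ x * (v x t₀ * v x t₀))
        - (2/K)*(∫ x in (0:ℝ)..1, ρ x * (v x t₀ * w x t₀))
        + (1/(K*K))*(∫ x in (0:ℝ)..1, ρ x * (w x t₀ * w x t₀))) :=
      mul_nonneg (by linarith) hvol
    have t1 : 0 ≤ 2*δ*(∫ x in (-l)..0, ux x t₀ * ux x t₀) :=
      mul_nonneg (by linarith) hIUnn
    have hDval : (∫ x in (-l)..0, (ut x t₀ * u x t₀ + u x t₀ * ut x t₀))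
          + φ * (∫ x in (0:ℝ)..1, ρ x * (vt x t₀ * v x t₀ + v x t₀ * vt x t₀))
          + ((1-φ)/K) * (∫ x in (0:ℝ)..1, ρ x * (wt x t₀ * w x t₀ + w x t₀ * wt x t₀))
        = (2*δ*(u 0 t₀ * ux 0 t₀) - 2*(v 0 t₀ * vx 0 t₀))
          - 2*δ*(∫ x in (-l)..0, ux x t₀ * ux x t₀)
          - 2*(∫ x in (0:ℝ)..1, ρ x * (vx x t₀ * vx x t₀))
          - 2*Da*((∫ x in (0:ℝ)..1, ρ x * (v x t₀ * v x t₀))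
            - (2/K)*(∫ x in (0:ℝ)..1, ρ x * (v x t₀ * w x t₀))
            + (1/(K*K))*(∫ x in (0:ℝ)..1, ρ x * (w x t₀ * w x t₀))) := by
      rw [hJ1, hJ2, hJ3]; ring
    refine ⟨_, hDE, ?_⟩
    rw [hDval]
    linarith [hbnd, hISnn, t1, t2]
  -- the energy is antitone, hence vanishes identically
  have hanti : AntitoneOn E (Icc 0 T) := by
    apply antitoneOn_of_deriv_nonpos (convex_Icc 0 T) hEc
    · intro t ht
      rw [interior_Icc] at ht
      obtain ⟨D, hD, _⟩ := hkey t ht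
      exact hD.differentiableAt.differentiableWithinAt
    · intro t ht
      rw [interior_Icc] at ht
      obtain ⟨D, hD, hDle⟩ := hkey t ht
      rw [hD.deriv]
      exact hDle
  have hc23 : 0 < (1-φ)/K := div_pos (by linarith) hK
  have hEzero : ∀ t ∈ Icc (0:ℝ) T, E1 t = 0 ∧ E2 t = 0 ∧ E3 t = 0 := by
    intro t ht
    have h1 : E t ≤ E 0 := hanti ⟨le_refl 0, hT.le⟩ ht ht.1
    have hEt : E t = E1 t + φ * E2 t + ((1-φ)/K) * E3 t := rfl
    have h2 : 0 ≤ φ * E2 t := mul_nonneg hφ0.le (hE2nn t)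
    have h3 : 0 ≤ ((1-φ)/K) * E3 t := mul_nonneg hc23.le (hE3nn t)
    have h4 := hE1nn t
    have h1' : E t ≤ 0 := by rw [hE0] at h1; exact h1
    have h6 : 0 ≤ E t := by rw [hEt]; linarith
    have h7 : E t = 0 := le_antisymm h1' h6
    have hEt0 : E1 t + φ * E2 t + ((1-φ)/K) * E3 t = 0 := by rw [← hEt]; exact h7
    refine ⟨by linarith, ?_, ?_⟩
    · have h5 : φ * E2 t = 0 := by linarith
      exact (mul_eq_zero.1 h5).resolve_left hφ0.ne'
    · have h5 : ((1-φ)/K) * E3 t = 0 := by linarith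
      exact (mul_eq_zero.1 h5).resolve_left hc23.ne'
  refine ⟨?_, ?_, ?_⟩
  · intro x hx t ht
    have h := dr_eq_zero_of_integral_eq_zero (f := fun y => u y t * u y t) hl0'
      (dr_sliceX (g := fun y s => u y s * u y s) hc_uu ht)
      (fun y _ => mul_self_nonneg _) (hEzero t ht).1 x hx
    exact mul_self_eq_zero.1 h
  · intro x hx t ht
    have h := dr_eq_zero_of_integral_eq_zero (f := fun y => ρ y * (v y t * v y t)) zero_lt_one
      (dr_sliceX (g := fun y s => ρ y * (v y s * v y s)) hc_vv ht)
      (fun y _ => mul_nonneg (hρpos y).le (mul_self_nonneg _)) (hEzero t ht).2.1 x hx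
    have h2 := (mul_eq_zero.1 h).resolve_left (hρpos x).ne'
    exact mul_self_eq_zero.1 h2
  · intro x hx t ht
    have h := dr_eq_zero_of_integral_eq_zero (f := fun y => ρ y * (w y t * w y t)) zero_lt_one
      (dr_sliceX (g := fun y s => ρ y * (w y s * w y s)) hc_ww ht)
      (fun y _ => mul_nonneg (hρpos y).le (mul_self_nonneg _)) (hEzero t ht).2.2 x hx
    have h2 := (mul_eq_zero.1 h).resolve_left (hρpos x).ne'
    exact mul_self_eq_zero.1 h2


/-- Uniqueness of classical solutions of the coupled drug-release system: two classical
solutions with the same initial data coincide on their space-time domains. -/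
theorem coupled_system_uniqueness
    (δ Pt Pe Da K l T φ : ℝ)
    (hδ : 0 < δ) (hPt : 0 < Pt) (hPe : 0 < Pe) (hDa : 0 < Da) (hK : 0 < K)
    (hl : 0 < l) (hT : 0 < T) (hφ : φ ∈ Set.Ioo (0 : ℝ) 1)
    (c ct cx cxx c₁ c₁t c₁x c₁xx c₂ c₂t : ℝ → ℝ → ℝ)
    (c' ct' cx' cxx' c₁' c₁t' c₁x' c₁xx' c₂' c₂t' : ℝ → ℝ → ℝ)
    (hsol : IsClassicalSolution δ Pt Pe Da K l T φ c ct cx cxx c₁ c₁t c₁x c₁xx c₂ c₂t)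
    (hsol' : IsClassicalSolution δ Pt Pe Da K l T φ
      c' ct' cx' cxx' c₁' c₁t' c₁x' c₁xx' c₂' c₂t')
    (hic : ∀ x ∈ Set.Icc (-l) 0, c x 0 = c' x 0)
    (hic₁ : ∀ x ∈ Set.Icc (0 : ℝ) 1, c₁ x 0 = c₁' x 0)
    (hic₂ : ∀ x ∈ Set.Icc (0 : ℝ) 1, c₂ x 0 = c₂' x 0) :
    (∀ x ∈ Set.Icc (-l) 0, ∀ t ∈ Set.Icc 0 T, c x t = c' x t) ∧
    (∀ x ∈ Set.Icc (0 : ℝ) 1, ∀ t ∈ Set.Icc 0 T, c₁ x t = c₁' x t) ∧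
    (∀ x ∈ Set.Icc (0 : ℝ) 1, ∀ t ∈ Set.Icc 0 T, c₂ x t = c₂' x t) := by
  have hdiff : IsClassicalSolution δ Pt Pe Da K l T φ
      (fun x t => c x t - c' x t) (fun x t => ct x t - ct' x t)
      (fun x t => cx x t - cx' x t) (fun x t => cxx x t - cxx' x t)
      (fun x t => c₁ x t - c₁' x t) (fun x t => c₁t x t - c₁t' x t)
      (fun x t => c₁x x t - c₁x' x t) (fun x t => c₁xx x t - c₁xx' x t)
      (fun x t => c₂ x t - c₂' x t) (fun x t => c₂t x t - c₂t' x t) :=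
    { cont_c := hsol.cont_c.sub hsol'.cont_c
      cont_ct := hsol.cont_ct.sub hsol'.cont_ct
      cont_cx := hsol.cont_cx.sub hsol'.cont_cx
      cont_cxx := hsol.cont_cxx.sub hsol'.cont_cxx
      cont_c₁ := hsol.cont_c₁.sub hsol'.cont_c₁
      cont_c₁t := hsol.cont_c₁t.sub hsol'.cont_c₁t
      cont_c₁x := hsol.cont_c₁x.sub hsol'.cont_c₁x
      cont_c₁xx := hsol.cont_c₁xx.sub hsol'.cont_c₁xx
      cont_c₂ := hsol.cont_c₂.sub hsol'.cont_c₂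
      cont_c₂t := hsol.cont_c₂t.sub hsol'.cont_c₂t
      hasDeriv_ct := fun x hx t ht =>
        (hsol.hasDeriv_ct x hx t ht).sub (hsol'.hasDeriv_ct x hx t ht)
      hasDeriv_cx := fun x hx t ht =>
        (hsol.hasDeriv_cx x hx t ht).sub (hsol'.hasDeriv_cx x hx t ht)
      hasDeriv_cxx := fun x hx t ht =>
        (hsol.hasDeriv_cxx x hx t ht).sub (hsol'.hasDeriv_cxx x hx t ht)
      hasDeriv_c₁t := fun x hx t ht =>
        (hsol.hasDeriv_c₁t x hx t ht).sub (hsol'.hasDeriv_c₁t x hx t ht)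
      hasDeriv_c₁x := fun x hx t ht =>
        (hsol.hasDeriv_c₁x x hx t ht).sub (hsol'.hasDeriv_c₁x x hx t ht)
      hasDeriv_c₁xx := fun x hx t ht =>
        (hsol.hasDeriv_c₁xx x hx t ht).sub (hsol'.hasDeriv_c₁xx x hx t ht)
      hasDeriv_c₂t := fun x hx t ht =>
        (hsol.hasDeriv_c₂t x hx t ht).sub (hsol'.hasDeriv_c₂t x hx t ht)
      pde_c := fun x hx t ht => by
        have h1 := hsol.pde_c x hx t ht
        have h2 := hsol'.pde_c x hx t ht
        linear_combination h1 - h2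
      bc_lumen := fun t ht => by
        have h1 := hsol.bc_lumen t ht
        have h2 := hsol'.bc_lumen t ht
        linear_combination h1 - h2
      bc_interface_c := fun t ht => by
        have h1 := hsol.bc_interface_c t ht
        have h2 := hsol'.bc_interface_c t ht
        linear_combination h1 - h2
      pde_c₁ := fun x hx t ht => by
        have h1 := hsol.pde_c₁ x hx t ht
        have h2 := hsol'.pde_c₁ x hx t ht
        linear_combination h1 - h2
      bc_interface_c₁ := fun t ht => by
        have h1 := hsol.bc_interface_c₁ t ht
        have h2 := hsol'.bc_interface_c₁ t ht
        linear_combination h1 - h2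
      bc_adventitia := fun t ht => by
        have h1 := hsol.bc_adventitia t ht
        have h2 := hsol'.bc_adventitia t ht
        linear_combination h1 - h2
      ode_c₂ := fun x hx t ht => by
        have h1 := hsol.ode_c₂ x hx t ht
        have h2 := hsol'.ode_c₂ x hx t ht
        linear_combination h1 - h2 }
  obtain ⟨hz, hz1, hz2⟩ := dr_zero_solution δ Pt Pe Da K l T φ hδ hPt hPe hDa hK hl hT hφ
    _ _ _ _ _ _ _ _ _ _ hdiff
    (fun x hx => by rw [hic x hx]; ring)
    (fun x hx => by rw [hic₁ x hx]; ring)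
    (fun x hx => by rw [hic₂ x hx]; ring)
  exact ⟨fun x hx t ht => sub_eq_zero.1 (hz x hx t ht),
    fun x hx t ht => sub_eq_zero.1 (hz1 x hx t ht),
    fun x hx t ht => sub_eq_zero.1 (hz2 x hx t ht)⟩
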